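/- Let f(x,y) be a homogeneous polynomial of degree n ≥ 2 in two real variables whose Hessian determinant (∂²f/∂x²)(∂²f/∂y²) − (∂²f/∂x∂y)² is identically zero. Then there exist real constants c and d, not both zero, and a real constant λ such that f(x,y) = λ(cx + dy)^n. -/

import Mathlib

section OneVariable
open Polynomial

lemma mult_eq (n : ℕ) (hn : 2 ≤ n) (q : ℂ[X]) (hq : q ≠ 0)
    (h : Polynomial.C (n:ℂ) * (q * derivative (derivative q)) =
      Polynomial.C ((n:ℂ)-1) * (derivative q)^2)
    (z : ℂ) (hz : q.IsRoot z) : rootMultiplicity z q = n := by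
  obtain ⟨m, hm⟩ : ∃ m, rootMultiplicity z q = m := ⟨_, rfl⟩
  rw [hm]
  have hqe : (X - Polynomial.C z) ^ m * (q /ₘ (X - Polynomial.C z) ^ m) = q := by
    rw [← hm]; exact pow_mul_divByMonic_rootMultiplicity_eq q z
  set r := q /ₘ (X - Polynomial.C z) ^ m with hr
  have hrz : r.eval z ≠ 0 := by
    rw [hr, ← hm]; exact eval_divByMonic_pow_rootMultiplicity_ne_zero z hq
  have hm1 : 1 ≤ m := hm ▸ (rootMultiplicity_pos hq).mpr hz
  have hn1 : (n:ℂ) - 1 ≠ 0 := by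
    have h1 : (n:ℂ) ≠ 1 := by exact_mod_cast (by omega : n ≠ 1)
    intro hc; apply h1; linear_combination hc
  rcases eq_or_lt_of_le hm1 with h1 | h2
  · -- m = 1 : contradiction
    exfalso
    have hq1 : q = (X - Polynomial.C z) * r := by rw [← hqe, ← h1, pow_one]
    have hd : (derivative q).eval z = r.eval z := by
      rw [hq1]; simp [derivative_mul]
    have heval := congrArg (Polynomial.eval z) h
    simp only [eval_mul, eval_C, eval_pow, hz.eq_zero, mul_zero, zero_mul, hd] at heval
    rcases mul_eq_zero.mp heval.symm with h' | h'
    · exact hn1 h'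
    · exact hrz (pow_eq_zero_iff (by norm_num) |>.mp h')
  · -- m ≥ 2
    obtain ⟨k, rfl⟩ : ∃ k, m = k + 2 := ⟨m - 2, by omega⟩
    set s : ℂ[X] := Polynomial.C ((k+2 : ℕ):ℂ) * r + (X - Polynomial.C z) * derivative r
      with hs
    set u : ℂ[X] := Polynomial.C ((k+1 : ℕ):ℂ) * s + (X - Polynomial.C z) * derivative s
      with hu
    have hq' : derivative q = (X - Polynomial.C z) ^ (k+1) * s := by
      rw [← hqe, derivative_mul, derivative_pow, derivative_sub, derivative_X, derivative_C,
        sub_zero, (by omega : k + 2 - 1 = k + 1), hs]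
      ring
    have hq'' : derivative (derivative q) = (X - Polynomial.C z) ^ k * u := by
      rw [hq', derivative_mul, derivative_pow, derivative_sub, derivative_X, derivative_C,
        sub_zero, (by omega : k + 1 - 1 = k), hu]
      ring
    have hcan : Polynomial.C (n:ℂ) * (r * u) = Polynomial.C ((n:ℂ)-1) * s^2 := by
      have hXz : (X - Polynomial.C z) ^ (2*k+2) ≠ 0 :=
        pow_ne_zero _ (X_sub_C_ne_zero z)
      apply mul_left_cancel₀ hXz
      calc (X - Polynomial.C z) ^ (2*k+2) * (Polynomial.C (n:ℂ) * (r * u))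
          = Polynomial.C (n:ℂ) * (((X - Polynomial.C z) ^ (k+2) * r) *
            ((X - Polynomial.C z) ^ k * u)) := by ring
        _ = Polynomial.C ((n:ℂ)-1) * ((X - Polynomial.C z) ^ (k+1) * s)^2 := by
            rw [hqe, ← hq'', ← hq', h]
        _ = (X - Polynomial.C z) ^ (2*k+2) * (Polynomial.C ((n:ℂ)-1) * s^2) := by ring
    have hsz : s.eval z = ((k+2 : ℕ):ℂ) * r.eval z := by rw [hs]; simp
    have huz : u.eval z = ((k+1 : ℕ):ℂ) * (((k+2 : ℕ):ℂ) * r.eval z) := by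
      rw [hu]; simp [hsz]
    have heval := congrArg (Polynomial.eval z) hcan
    rw [eval_mul, eval_mul, eval_mul, eval_C, eval_C, eval_pow, hsz, huz] at heval
    have hk2 : ((k+2 : ℕ):ℂ) ≠ 0 := Nat.cast_ne_zero.mpr (by omega)
    have key : (n:ℂ) * ((k+1 : ℕ):ℂ) = ((n:ℂ)-1) * ((k+2 : ℕ):ℂ) := by
      apply mul_right_cancel₀ (mul_ne_zero hk2 (mul_ne_zero hrz hrz))
      linear_combination heval
    have key2 : (n:ℂ) * ((k+1 : ℕ):ℂ) + ((k+2 : ℕ):ℂ) = (n:ℂ) * ((k+2 : ℕ):ℂ) := by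
      linear_combination key
    have key3 : n * (k+1) + (k+2) = n * (k+2) := by exact_mod_cast key2
    have : n = k + 2 := by
      have := Nat.mul_add n (k+1) 1
      nlinarith [key3]
    omega


lemma poly_key (n : ℕ) (hn : 2 ≤ n) (p : ℝ[X]) (hdeg : p.natDegree ≤ n)
    (h : Polynomial.C (n:ℝ) * (p * derivative (derivative p)) =
      Polynomial.C ((n:ℝ)-1) * (derivative p)^2) :
    ∃ c d lam : ℝ, (c ≠ 0 ∨ d ≠ 0) ∧
      p = Polynomial.C lam * (Polynomial.C c * X + Polynomial.C d)^n := by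
  by_cases hp0 : p = 0
  · exact ⟨1, 0, 0, Or.inl one_ne_zero, by simp [hp0]⟩
  by_cases hd0 : p.natDegree = 0
  · refine ⟨0, 1, p.coeff 0, Or.inr one_ne_zero, ?_⟩
    rw [eq_C_of_natDegree_eq_zero hd0]; simp
  -- now degree ≥ 1
  set ι := algebraMap ℝ ℂ with hι
  have hinj : Function.Injective ι := Complex.ofReal_injective
  set q : ℂ[X] := p.map ι with hqdef
  have hq0 : q ≠ 0 := (Polynomial.map_ne_zero_iff hinj).mpr hp0
  have hqdeg : q.natDegree = p.natDegree := natDegree_map_eq_of_injective hinj p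
  have hODE : Polynomial.C (n:ℂ) * (q * derivative (derivative q)) =
      Polynomial.C ((n:ℂ)-1) * (derivative q)^2 := by
    rw [hqdef, derivative_map, derivative_map]
    have := congrArg (Polynomial.map ι) h
    simp only [Polynomial.map_mul, Polynomial.map_pow, map_C] at this
    convert this using 3 <;> simp [hι]
  obtain ⟨z, hz⟩ : ∃ z, q.IsRoot z := by
    apply Complex.exists_root
    rw [degree_eq_natDegree hq0]
    exact_mod_cast Nat.pos_of_ne_zero (show q.natDegree ≠ 0 by rw [hqdeg]; exact hd0)
  have hmult : rootMultiplicity z q = n := mult_eq n hn q hq0 hODE z hz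
  have hdvd : (X - Polynomial.C z) ^ n ∣ q := hmult ▸ pow_rootMultiplicity_dvd q z
  obtain ⟨r, hqr⟩ := hdvd
  have hr0 : r ≠ 0 := by rintro rfl; simp at hqr; exact hq0 hqr
  have hrdeg : r.natDegree = 0 := by
    have h1 : q.natDegree = n + r.natDegree := by
      rw [hqr, natDegree_mul (pow_ne_zero _ (X_sub_C_ne_zero z)) hr0,
        natDegree_pow, natDegree_X_sub_C, mul_one]
    rw [hqdeg] at h1; omega
  obtain ⟨a, rfl⟩ : ∃ a : ℂ, r = Polynomial.C a := ⟨r.coeff 0, eq_C_of_natDegree_eq_zero hrdeg⟩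
  have ha0 : a ≠ 0 := fun hc => hr0 (by rw [hc, map_zero])
  -- conj z is also a root
  have hconj : q.IsRoot ((starRingEnd ℂ) z) := by
    have h1 : (aeval ((starRingEnd ℂ) z)) p = (starRingEnd ℂ) ((aeval z) p) :=
      Polynomial.aeval_conj p z
    have hz' : (aeval z) p = 0 := by rw [aeval_def, ← eval_map, ← hqdef]; exact hz
    have h2 : (aeval ((starRingEnd ℂ) z)) p = 0 := by rw [h1, hz', map_zero]
    rw [aeval_def, ← eval_map, ← hqdef] at h2
    exact h2
  have hzre : (starRingEnd ℂ) z = z := by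
    have := hconj
    rw [hqr] at this
    simp only [IsRoot, eval_mul, eval_pow, eval_sub, eval_X, eval_C] at this
    rcases mul_eq_zero.mp this with h' | h'
    · obtain h'' := pow_eq_zero_iff (by omega : n ≠ 0) |>.mp h'
      linear_combination h''
    · exact absurd h' ha0
  obtain ⟨x, hx⟩ : ∃ x : ℝ, (x:ℂ) = z := ⟨z.re, by rw [Complex.conj_eq_iff_re.mp hzre]⟩
  have halc : (p.leadingCoeff : ℂ) = a := by
    have : q.leadingCoeff = a := by
      rw [hqr, leadingCoeff_mul, leadingCoeff_pow, leadingCoeff_C]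
      simp [monic_X_sub_C z]
    rwa [hqdef, leadingCoeff_map_of_injective hinj] at this
  refine ⟨1, -x, p.leadingCoeff, Or.inl one_ne_zero, ?_⟩
  apply Polynomial.map_injective ι hinj
  rw [hqdef] at hqr
  rw [hqr, Polynomial.map_mul, Polynomial.map_pow, Polynomial.map_add, Polynomial.map_mul,
    map_C, map_C, map_C, Polynomial.map_X]
  have e1 : ι p.leadingCoeff = a := by rw [hι, Complex.coe_algebraMap]; exact halc
  have e3 : ι (-x) = -z := by rw [hι, map_neg, Complex.coe_algebraMap, hx]
  rw [e1, e3, map_one, map_neg, Polynomial.C_1]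
  ring

end OneVariable

section TwoVariables
open MvPolynomial Polynomial

noncomputable def phi : MvPolynomial (Fin 2) ℝ →ₐ[ℝ] Polynomial ℝ :=
  MvPolynomial.aeval ![Polynomial.X, 1]


lemma phi_C (r : ℝ) : phi (MvPolynomial.C r) = Polynomial.C r := by
  simp [phi, algebraMap_eq]

lemma phi_X0 : phi (X 0) = Polynomial.X := by simp [phi]

lemma phi_X1 : phi (X 1) = 1 := by simp [phi]





lemma phi_monomial (d : Fin 2 →₀ ℕ) (c : ℝ) :
    phi (MvPolynomial.monomial d c) = Polynomial.C c * Polynomial.X ^ (d 0) := by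
  rw [phi, MvPolynomial.aeval_monomial, Finsupp.prod_pow]
  simp [Fin.prod_univ_two, algebraMap_eq]

lemma deg2 (d : Fin 2 →₀ ℕ) : d.degree = d 0 + d 1 := by
  rw [Finsupp.degree_apply, Finset.sum_subset (Finset.subset_univ _)
    (by intro i _ hi; simpa using Finsupp.notMem_support_iff.mp hi), Fin.sum_univ_two]

lemma coeff_phi (h : MvPolynomial (Fin 2) ℝ) (k : ℕ) :
    (phi h).coeff k = ∑ d ∈ h.support, if d 0 = k then h.coeff d else 0 := by
  conv_lhs => rw [h.as_sum, map_sum, Polynomial.finset_sum_coeff]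
  apply Finset.sum_congr rfl
  intro d _
  rw [phi_monomial, Polynomial.coeff_C_mul, Polynomial.coeff_X_pow]
  split
  · simp [*]
  · next hne => rw [if_neg (fun hc => hne hc.symm), mul_zero]

lemma ext2 {d e : Fin 2 →₀ ℕ} (h0 : d 0 = e 0) (h1 : d 1 = e 1) : d = e := by
  ext i; fin_cases i <;> assumption

lemma hom_deg {n : ℕ} {h : MvPolynomial (Fin 2) ℝ} (hh : h.IsHomogeneous n)
    {d : Fin 2 →₀ ℕ} (hd : d ∈ h.support) : d 0 + d 1 = n := by
  have := hh (MvPolynomial.mem_support_iff.mp hd)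
  rwa [Pi.one_def, ← Finsupp.degree_eq_weight_one, deg2] at this

lemma phi_inj {n : ℕ} {h : MvPolynomial (Fin 2) ℝ} (hh : h.IsHomogeneous n)
    (h0 : phi h = 0) : h = 0 := by
  ext d
  by_cases hd : d ∈ h.support
  · have key := coeff_phi h (d 0)
    rw [h0, Polynomial.coeff_zero] at key
    rw [Finset.sum_eq_single d ?_ (by simp [hd])] at key
    · simpa using key.symm
    · intro e he hne
      split
      · next heq =>
        exfalso; apply hne; apply ext2 heq
        have h1 := hom_deg hh he
        have h2 := hom_deg hh hd
        omega
      · rfl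
  · simpa using MvPolynomial.notMem_support_iff.mp hd

lemma phi_natDegree_le {n : ℕ} {h : MvPolynomial (Fin 2) ℝ} (hh : h.IsHomogeneous n) :
    (phi h).natDegree ≤ n := by
  apply Polynomial.natDegree_le_iff_coeff_eq_zero.mpr
  intro k hk
  rw [coeff_phi]
  apply Finset.sum_eq_zero
  intro d hd
  have h2 := hom_deg hh hd
  have : d 0 ≠ k := by omega
  simp [this]





lemma phi_pderiv0 (g : MvPolynomial (Fin 2) ℝ) :
    phi (pderiv 0 g) = derivative (phi g) := by
  induction g using MvPolynomial.induction_on with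
  | C a => simp [phi, algebraMap_eq]
  | add p q hp hq => simp [map_add, hp, hq]
  | mul_X p i hp =>
    rw [pderiv_mul, map_add, map_mul, map_mul, hp, map_mul, derivative_mul]
    fin_cases i <;> simp [phi, pderiv_X]

lemma euler {n : ℕ} {f : MvPolynomial (Fin 2) ℝ} (hf : f.IsHomogeneous n) :
    X 0 * pderiv 0 f + X 1 * pderiv 1 f = MvPolynomial.C (n : ℝ) * f := by
  have key : ∀ (d : Fin 2 →₀ ℕ) (c : ℝ) (i : Fin 2),
      X i * pderiv i (MvPolynomial.monomial d c) =
        MvPolynomial.C (d i : ℝ) * MvPolynomial.monomial d c := by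
    intro d c i
    have hX : (MvPolynomial.X i : MvPolynomial (Fin 2) ℝ)
        = MvPolynomial.monomial (Finsupp.single i 1) 1 := by
      simpa using (MvPolynomial.C_mul_X_eq_monomial (s := i) (a := (1:ℝ)))
    rw [pderiv_monomial]
    rcases Nat.eq_zero_or_pos (d i) with h | h
    · simp [h]
    · have hle : Finsupp.single i 1 ≤ d := Finsupp.single_le_iff.mpr h
      rw [hX, monomial_mul, one_mul, MvPolynomial.C_mul_monomial]
      congr 1
      · rw [add_comm, tsub_add_cancel_of_le hle]
      · ring
  conv_lhs => rw [f.as_sum]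
  conv_rhs => rw [f.as_sum]
  rw [map_sum, map_sum, Finset.mul_sum, Finset.mul_sum, Finset.mul_sum,
    ← Finset.sum_add_distrib]
  apply Finset.sum_congr rfl
  intro d hd
  rw [key, key, ← add_mul, ← map_add, ← Nat.cast_add, hom_deg hf hd]

lemma pderiv_hom {n : ℕ} {f : MvPolynomial (Fin 2) ℝ} (hf : f.IsHomogeneous n) (i : Fin 2) :
    (pderiv i f).IsHomogeneous (n - 1) := by
  conv_lhs => rw [f.as_sum]
  rw [map_sum]
  apply MvPolynomial.IsHomogeneous.sum
  intro d hd
  rw [pderiv_monomial]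
  rcases Nat.eq_zero_or_pos (d i) with h | h
  · simp only [h, Nat.cast_zero, mul_zero, map_zero]
    exact isHomogeneous_zero _ _ _
  · apply isHomogeneous_monomial
    have h2 : d 0 + d 1 = n := hom_deg hf hd
    have hi : i = 0 ∨ i = 1 := by omega
    rw [deg2, Finsupp.tsub_apply, Finsupp.tsub_apply]
    rcases hi with rfl | rfl <;> simp [Finsupp.single_apply] <;> omega




theorem homog_aux_main (n : ℕ) (hn : 2 ≤ n)
    (f : MvPolynomial (Fin 2) ℝ) (hf : f.IsHomogeneous n)
    (hH : pderiv 0 (pderiv 0 f) * pderiv 1 (pderiv 1 f) -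
        (pderiv 0 (pderiv 1 f)) ^ 2 = 0) :
    ∃ c d lam : ℝ, (c ≠ 0 ∨ d ≠ 0) ∧
      f = MvPolynomial.C lam * (MvPolynomial.C c * MvPolynomial.X 0
        + MvPolynomial.C d * MvPolynomial.X 1) ^ n := by
  set p : ℝ[X] := phi f with hp
  set A : ℝ[X] := phi (pderiv 1 f) with hAdef
  set B2 : ℝ[X] := phi (pderiv 1 (pderiv 1 f)) with hBdef
  have hfy : (pderiv 1 f).IsHomogeneous (n - 1) := pderiv_hom hf 1
  have e1 : Polynomial.X * derivative p + A = Polynomial.C (n:ℝ) * p := by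
    have := congrArg phi (euler hf)
    simpa [map_add, map_mul, phi_X0, phi_X1, phi_C, phi_pderiv0] using this
  have e2 : Polynomial.X * derivative A + B2 = Polynomial.C ((n:ℝ) - 1) * A := by
    have := congrArg phi (euler hfy)
    have hc : ((n - 1 : ℕ) : ℝ) = (n:ℝ) - 1 := by
      rw [Nat.cast_sub (by omega)]; norm_num
    simpa [map_add, map_mul, phi_X0, phi_X1, phi_C, phi_pderiv0, hc] using this
  have h0 : derivative (derivative p) * B2 - (derivative A)^2 = 0 := by
    have := congrArg phi hH
    simpa [map_sub, map_mul, map_pow, phi_pderiv0] using this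
  have hA : A = Polynomial.C (n:ℝ) * p - Polynomial.X * derivative p := by
    linear_combination e1
  have hdA : derivative A = Polynomial.C (n:ℝ) * derivative p - derivative p
      - Polynomial.X * derivative (derivative p) := by
    rw [hA]
    simp only [derivative_sub, derivative_mul, derivative_X, derivative_C, one_mul, zero_mul]
    ring
  have hB2 : B2 = Polynomial.C ((n:ℝ) - 1) * A - Polynomial.X * derivative A := by
    linear_combination e2
  rw [hB2, hdA, hA] at h0
  have hCn : Polynomial.C ((n:ℝ) - 1) = Polynomial.C (n:ℝ) - 1 := by
    rw [map_sub, map_one]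
  rw [hCn] at h0
  have hn1 : Polynomial.C ((n:ℝ) - 1) ≠ 0 := by
    rw [Ne, Polynomial.C_eq_zero]
    intro hc
    have : (n:ℝ) = 1 := by linarith
    exact (by omega : n ≠ 1) (by exact_mod_cast this)
  have hODE : Polynomial.C (n:ℝ) * (p * derivative (derivative p)) =
      Polynomial.C ((n:ℝ)-1) * (derivative p)^2 := by
    have hzero : Polynomial.C ((n:ℝ) - 1) *
        (Polynomial.C (n:ℝ) * (p * derivative (derivative p)) -
          Polynomial.C ((n:ℝ)-1) * (derivative p)^2) = 0 := by
      rw [hCn]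
      linear_combination h0
    rcases mul_eq_zero.mp hzero with h' | h'
    · exact absurd h' hn1
    · linear_combination h'
  obtain ⟨c, d, lam, hcd, hpe⟩ := poly_key n hn p (phi_natDegree_le hf) hODE
  set g : MvPolynomial (Fin 2) ℝ := MvPolynomial.C lam * (MvPolynomial.C c * MvPolynomial.X 0
    + MvPolynomial.C d * MvPolynomial.X 1) ^ n with hg
  have hghom : g.IsHomogeneous n := by
    have h1 : (MvPolynomial.C c * MvPolynomial.X 0
        + MvPolynomial.C d * MvPolynomial.X 1 : MvPolynomial (Fin 2) ℝ).IsHomogeneous 1 :=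
      (isHomogeneous_C_mul_X c 0).add (isHomogeneous_C_mul_X d 1)
    have h2 : ((MvPolynomial.C c * MvPolynomial.X 0
        + MvPolynomial.C d * MvPolynomial.X 1 : MvPolynomial (Fin 2) ℝ) ^ n).IsHomogeneous
        (1 * n) := h1.pow n
    have h4 : (MvPolynomial.C lam * (MvPolynomial.C c * MvPolynomial.X 0
        + MvPolynomial.C d * MvPolynomial.X 1) ^ n : MvPolynomial (Fin 2) ℝ).IsHomogeneous
        (1 * n) := h2.C_mul lam
    rw [hg]
    simpa using h4
  have hphig : phi g = p := by
    rw [hg, map_mul, map_pow, map_add, map_mul, map_mul, phi_C, phi_C, phi_C, phi_X0, phi_X1,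
      mul_one, hpe]
  have : f - g = 0 := phi_inj (hf.sub hghom) (by rw [map_sub, hphig, ← hp, sub_self])
  exact ⟨c, d, lam, hcd, by linear_combination this⟩

end TwoVariables

open MvPolynomial

/-- A homogeneous polynomial of degree n ≥ 2 in two variables whose Hessian determinant
vanishes identically is λ(cx+dy)^n. -/
theorem homogeneous_zero_hessian_is_power (n : ℕ) (hn : 2 ≤ n)
    (f : MvPolynomial (Fin 2) ℝ) (hf : f.IsHomogeneous n)
    (hH : pderiv 0 (pderiv 0 f) * pderiv 1 (pderiv 1 f) -
        (pderiv 0 (pderiv 1 f)) ^ 2 = 0) :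
    ∃ c d lam : ℝ, (c ≠ 0 ∨ d ≠ 0) ∧
      f = C lam * (C c * X 0 + C d * X 1) ^ n := by
  exact homog_aux_main n hn f hf hH
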